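/- Let (ν_i) be a sequence of strictly aperiodic probability measures on ℤ such that E(ν_i) = 0 for all i, there is a constant B with ∑_{i=1}^n m₂(ν_i)² ≤ B·n for all n, and there exist a constant C > 0 and an integer N₀ > 0 such that |ν̂_n(t)| ≤ e^{−Ct²} for all n > N₀ and all t ∈ [−1/2, 1/2). Let μ_n = ν₁ * … * ν_n. Then there is a constant C' such that for every k ≥ 1, every j ∈ ℤ with j + k ≥ 1, every n with 4^{k−1} ≤ n < 4^k, and every t with 2^{−(j+k)−1} ≤ |t| ≤ 2^{−(j+k)}, we have |μ̂_n(t) − μ̂_{4^{k−1}}(t)| ≤ C' · 4^{−|j|}. -/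

import Mathlib

open scoped ENNReal NNReal BigOperators
open MeasureTheory

noncomputable section

/-- A probability measure on ℤ, viewed as a nonnegative function summing to 1. -/
def IsProbZ (ν : ℤ → ℝ) : Prop := (∀ k, 0 ≤ ν k) ∧ HasSum ν 1

/-- Fourier transform of a measure on ℤ: ν̂(t) = ∑ₖ ν(k) e^{-2πikt}. -/
def fourierZ (ν : ℤ → ℝ) (t : ℝ) : ℂ :=
  ∑' k : ℤ, (ν k : ℂ) * Complex.exp ((-2 * (Real.pi : ℂ) * Complex.I) * (k : ℂ) * (t : ℂ))

/-- p-th moment of a measure on ℤ. -/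
def moment (p : ℝ) (ν : ℤ → ℝ) : ℝ := ∑' k : ℤ, |(k : ℝ)| ^ p * ν k

/-- ν is strictly aperiodic: its support is not contained in any coset of a
proper subgroup of ℤ. -/
def StrictlyAperiodic (ν : ℤ → ℝ) : Prop :=
  ¬ ∃ (H : AddSubgroup ℤ) (a : ℤ), H ≠ ⊤ ∧ ∀ k, ν k ≠ 0 → k - a ∈ H

/-- Convolution of two measures on ℤ. -/
def convZ (ν₁ ν₂ : ℤ → ℝ) : ℤ → ℝ := fun k => ∑' j : ℤ, ν₁ j * ν₂ (k - j)

/-- `convProd ν n = ν 1 * ⋯ * ν n` (convolution product), with `convProd ν 0 = δ₀`. -/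
def convProd (ν : ℕ → ℤ → ℝ) : ℕ → ℤ → ℝ
  | 0 => fun k => if k = 0 then 1 else 0
  | n + 1 => convZ (convProd ν n) (ν (n + 1))

/-- Variation ρ-norm of a sequence of reals over an index set `I ⊆ ℕ`:
the sup over nondecreasing sequences with values in `I` of
`(∑ⱼ |x_{n(j)} - x_{n(j+1)}|^ρ)^{1/ρ}`, valued in `ℝ≥0∞`. -/
def vNorm (ρ : ℝ) (I : Set ℕ) (x : ℕ → ℝ) : ℝ≥0∞ :=
  ⨆ (n : ℕ → ℕ) (_ : Monotone n) (_ : ∀ j, n j ∈ I),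
    (∑' j : ℕ, (ENNReal.ofReal |x (n j) - x (n (j + 1))|) ^ ρ) ^ (1 / ρ)

/-- Oscillation s-norm of a sequence of reals relative to the increasing
sequence `nk` of indices. -/
def oNorm (s : ℝ) (nk : ℕ → ℕ) (x : ℕ → ℝ) : ℝ≥0∞ :=
  (∑' k : ℕ,
    (⨆ (n : ℕ) (_ : nk k ≤ n ∧ n ≤ nk (k + 1)), ENNReal.ofReal |x n - x (nk k)|) ^ s) ^ (1 / s)

/-- Action of a measure on ℤ on a function via a (bi-)measure-preserving map:
`μ f (x) = ∑ⱼ μ(j) f(T^j x)`. -/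
def act {X : Type*} (T : Equiv.Perm X) (μ : ℤ → ℝ) (f : X → ℝ) (x : X) : ℝ :=
  ∑' j : ℤ, μ j * f ((T ^ j) x)

end

namespace KFBaux

noncomputable def e (k : ℤ) (t : ℝ) : ℂ :=
  Complex.exp ((-2 * (Real.pi : ℂ) * Complex.I) * (k : ℂ) * (t : ℂ))

lemma abs_e (k : ℤ) (t : ℝ) : ‖e k t‖ = 1 := by
  rw [e, Complex.norm_exp]
  have : ((-2 * (Real.pi : ℂ) * Complex.I) * (k : ℂ) * (t : ℂ)).re = 0 := by
    simp [Complex.mul_re, Complex.mul_im]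
  rw [this, Real.exp_zero]

lemma e_add (j m : ℤ) (t : ℝ) : e (j + m) t = e j t * e m t := by
  rw [e, e, e, ← Complex.exp_add]
  congr 1
  push_cast
  ring

lemma fourierZ_eq (ν : ℤ → ℝ) (t : ℝ) : fourierZ ν t = ∑' k : ℤ, (ν k : ℂ) * e k t := rfl

/-- index shuffle -/
def σ : ℤ × ℤ ≃ ℤ × ℤ where
  toFun p := (p.1 + p.2, p.1)
  invFun q := (q.2, q.1 - q.2)
  left_inv p := by simp
  right_inv q := by simp

lemma norm_coe_mul_e {ν : ℤ → ℝ} (h : ∀ k, 0 ≤ ν k) (t : ℝ) (k : ℤ) :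
    ‖(ν k : ℂ) * e k t‖ = ν k := by
  rw [norm_mul, abs_e, mul_one,
    Complex.norm_real, Real.norm_eq_abs, abs_of_nonneg (h k)]

lemma summable_norm_coe {ν : ℤ → ℝ} (h : IsProbZ ν) (t : ℝ) :
    Summable (fun k : ℤ => ‖(ν k : ℂ) * e k t‖) := by
  simpa only [norm_coe_mul_e h.1 t] using h.2.summable

lemma abs_fourierZ_le_one {ν : ℤ → ℝ} (h : IsProbZ ν) (t : ℝ) :
    ‖fourierZ ν t‖ ≤ 1 := by
  rw [fourierZ_eq]
  calc ‖∑' k : ℤ, (ν k : ℂ) * e k t‖ ≤ ∑' k : ℤ, ‖(ν k : ℂ) * e k t‖ :=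
        norm_tsum_le_tsum_norm (summable_norm_coe h t)
    _ = ∑' k : ℤ, ν k := by
        exact tsum_congr fun k => norm_coe_mul_e h.1 t k
    _ = 1 := h.2.tsum_eq

lemma summable_H {a b : ℤ → ℝ} (ha : IsProbZ a) (hb : IsProbZ b) :
    Summable (fun q : ℤ × ℤ => a q.2 * b (q.1 - q.2)) := by
  have h1 : Summable (fun p : ℤ × ℤ => a p.1 * b p.2) :=
    ha.2.summable.mul_of_nonneg hb.2.summable ha.1 hb.1
  have hcomp : ((fun q : ℤ × ℤ => a q.2 * b (q.1 - q.2)) ∘ σ) = fun p : ℤ × ℤ => a p.1 * b p.2 := by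
    funext p; simp [σ]
  exact (σ.summable_iff (f := fun q : ℤ × ℤ => a q.2 * b (q.1 - q.2))).1 (by rw [hcomp]; exact h1)

lemma isProbZ_convZ {a b : ℤ → ℝ} (ha : IsProbZ a) (hb : IsProbZ b) :
    IsProbZ (convZ a b) := by
  have hH := summable_H ha hb
  constructor
  · intro k
    exact tsum_nonneg fun j => mul_nonneg (ha.1 j) (hb.1 (k - j))
  · have hsum : Summable (convZ a b) := by
      have := hH.prod
      exact this
    rw [Summable.hasSum_iff hsum]
    have h1 : ∑' q : ℤ × ℤ, a q.2 * b (q.1 - q.2) = ∑' p : ℤ × ℤ, a p.1 * b p.2 := by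
      rw [← σ.tsum_eq (f := fun q : ℤ × ℤ => a q.2 * b (q.1 - q.2))]
      simp [σ]
    have h2 : ∑' p : ℤ × ℤ, a p.1 * b p.2 = (∑' j, a j) * ∑' m, b m := by
      refine (tsum_mul_tsum_of_summable_norm ?_ ?_).symm
      · simpa using ha.2.summable.abs
      · simpa using hb.2.summable.abs
    have h3 := Summable.tsum_prod hH
    calc ∑' k, convZ a b k = ∑' q : ℤ × ℤ, a q.2 * b (q.1 - q.2) := by
          rw [h3]; rfl
      _ = 1 := by rw [h1, h2, ha.2.tsum_eq, hb.2.tsum_eq, one_mul]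

lemma fourierZ_convZ {a b : ℤ → ℝ} (ha : IsProbZ a) (hb : IsProbZ b) (t : ℝ) :
    fourierZ (convZ a b) t = fourierZ a t * fourierZ b t := by
  set f : ℤ → ℂ := fun j => (a j : ℂ) * e j t with hf
  set g : ℤ → ℂ := fun m => (b m : ℂ) * e m t with hg
  have hnf : Summable fun j => ‖f j‖ := summable_norm_coe ha t
  have hng : Summable fun m => ‖g m‖ := summable_norm_coe hb t
  have hFnorm : Summable fun p : ℤ × ℤ => ‖f p.1 * g p.2‖ := hnf.mul_norm hng
  have hF : Summable fun p : ℤ × ℤ => f p.1 * g p.2 := hFnorm.of_norm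
  have hG : Summable fun q : ℤ × ℤ => f q.2 * g (q.1 - q.2) := by
    have hcomp : ((fun q : ℤ × ℤ => f q.2 * g (q.1 - q.2)) ∘ σ) = fun p : ℤ × ℤ => f p.1 * g p.2 := by
      funext p; simp [σ]
    exact (σ.summable_iff (f := fun q : ℤ × ℤ => f q.2 * g (q.1 - q.2))).1 (by rw [hcomp]; exact hF)
  have h1 : ∑' q : ℤ × ℤ, f q.2 * g (q.1 - q.2) = ∑' p : ℤ × ℤ, f p.1 * g p.2 := by
    rw [← σ.tsum_eq (f := fun q : ℤ × ℤ => f q.2 * g (q.1 - q.2))]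
    simp [σ]
  have h2 : ∑' p : ℤ × ℤ, f p.1 * g p.2 = fourierZ a t * fourierZ b t := by
    rw [fourierZ_eq, fourierZ_eq]
    exact (tsum_mul_tsum_of_summable_norm hnf hng).symm
  have h3 : ∑' q : ℤ × ℤ, f q.2 * g (q.1 - q.2)
      = ∑' k : ℤ, ∑' j : ℤ, f j * g (k - j) := Summable.tsum_prod hG
  have h4 : ∀ k : ℤ, (∑' j : ℤ, f j * g (k - j)) = (convZ a b k : ℂ) * e k t := by
    intro k
    have hterm : ∀ j : ℤ, f j * g (k - j) = ((a j * b (k - j) : ℝ) : ℂ) * e k t := by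
      intro j
      have : e j t * e (k - j) t = e k t := by
        rw [← e_add]; norm_num
      push_cast
      rw [hf, hg]
      dsimp only
      rw [← this]; ring
    calc (∑' j : ℤ, f j * g (k - j)) = ∑' j : ℤ, ((a j * b (k - j) : ℝ) : ℂ) * e k t := by
          simp_rw [hterm]
      _ = (∑' j : ℤ, ((a j * b (k - j) : ℝ) : ℂ)) * e k t := tsum_mul_right
      _ = (convZ a b k : ℂ) * e k t := by
          rw [← Complex.ofReal_tsum]; rfl
  rw [fourierZ_eq, ← h2, ← h1, h3]
  exact (tsum_congr h4).symm

lemma isProbZ_delta : IsProbZ (fun k : ℤ => if k = 0 then 1 else 0) := by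
  constructor
  · intro k
    by_cases hk : k = 0 <;> simp [hk]
  · exact hasSum_ite_eq 0 1

lemma isProbZ_convProd (ν : ℕ → ℤ → ℝ) (hprob : ∀ i, 1 ≤ i → IsProbZ (ν i)) (n : ℕ) :
    IsProbZ (convProd ν n) := by
  induction n with
  | zero => exact isProbZ_delta
  | succ m ih => exact isProbZ_convZ ih (hprob (m + 1) (Nat.succ_le_succ (Nat.zero_le m)))

lemma fourierZ_delta (t : ℝ) : fourierZ (fun k : ℤ => if k = 0 then 1 else 0) t = 1 := by
  rw [fourierZ_eq]
  rw [tsum_eq_single 0 (by intro k hk; simp [hk])]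
  simp [e]

lemma fourierZ_convProd (ν : ℕ → ℤ → ℝ) (hprob : ∀ i, 1 ≤ i → IsProbZ (ν i)) (t : ℝ) (n : ℕ) :
    fourierZ (convProd ν n) t = ∏ i ∈ Finset.Icc 1 n, fourierZ (ν i) t := by
  induction n with
  | zero => simp [convProd, fourierZ_delta]
  | succ m ih =>
      have h1 : convProd ν (m + 1) = convZ (convProd ν m) (ν (m + 1)) := rfl
      rw [h1, fourierZ_convZ (isProbZ_convProd ν hprob m)
        (hprob (m + 1) (Nat.succ_le_succ (Nat.zero_le m))), ih,
        Finset.prod_Icc_succ_top (Nat.succ_le_succ (Nat.zero_le m))]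

/-- periodicity at the boundary point 1/2 -/
lemma fourierZ_half (ν : ℤ → ℝ) : fourierZ ν (1/2 : ℝ) = fourierZ ν (-(1/2) : ℝ) := by
  rw [fourierZ, fourierZ]
  refine tsum_congr fun k => ?_
  congr 1
  have h1 : (-2 * (Real.pi : ℂ) * Complex.I) * (k : ℂ) * (((1:ℝ)/2 : ℝ) : ℂ)
      = (-2 * (Real.pi : ℂ) * Complex.I) * (k : ℂ) * (((-(1/2) : ℝ)) : ℂ)
        + ((-k : ℤ) : ℂ) * (2 * (Real.pi : ℂ) * Complex.I) := by
    push_cast; ring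
  rw [h1, Complex.exp_add, Complex.exp_int_mul_two_pi_mul_I, mul_one]

/-- pointwise bound |exp(ix) - 1 - ix| ≤ 3x² -/
lemma abs_exp_I_sub_one_sub_le (x : ℝ) :
    ‖Complex.exp (Complex.I * x) - 1 - Complex.I * x‖ ≤ 3 * x ^ 2 := by
  have habs : ‖Complex.I * x‖ = |x| := by
    rw [norm_mul, Complex.norm_I, one_mul, Complex.norm_real, Real.norm_eq_abs]
  by_cases hx : |x| ≤ 1
  · have := Complex.norm_exp_sub_one_sub_id_le (x := Complex.I * x) (by rw [habs]; exact hx)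
    calc ‖Complex.exp (Complex.I * x) - 1 - Complex.I * x‖
        ≤ ‖Complex.I * x‖ ^ 2 := this
      _ = x ^ 2 := by rw [habs, sq_abs]
      _ ≤ 3 * x ^ 2 := by nlinarith [sq_nonneg x]
  · push_neg at hx
    have h1 : ‖Complex.exp (Complex.I * x)‖ = 1 := by
      rw [Complex.norm_exp]
      have : (Complex.I * (x : ℂ)).re = 0 := by simp
      rw [this, Real.exp_zero]
    have hxx : 1 ≤ x ^ 2 := by nlinarith [abs_nonneg x, sq_abs x]
    have hax : |x| ≤ x ^ 2 := by nlinarith [abs_nonneg x, sq_abs x]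
    have e1 : ‖Complex.exp (Complex.I * x) - 1 - Complex.I * x‖
        ≤ ‖Complex.exp (Complex.I * x) - 1‖ + ‖Complex.I * x‖ :=
      norm_sub_le _ _
    have e2 : ‖Complex.exp (Complex.I * x) - 1‖
        ≤ ‖Complex.exp (Complex.I * x)‖ + 1 := by
      simpa using norm_sub_le (Complex.exp (Complex.I * x)) (1 : ℂ)
    rw [habs] at e1
    rw [h1] at e2
    linarith

/-- bound on |ν̂(t) - 1| via second moment, for mean-zero ν -/
lemma abs_fourierZ_sub_one_le {ν : ℤ → ℝ} (h : IsProbZ ν)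
    (hm : Summable (fun k : ℤ => |(k : ℝ)| ^ (2 : ℝ) * ν k))
    (hz : HasSum (fun k : ℤ => (k : ℝ) * ν k) 0) (t : ℝ) :
    ‖fourierZ ν t - 1‖ ≤ 12 * Real.pi ^ 2 * t ^ 2 * moment 2 ν := by
  have hm' : Summable (fun k : ℤ => (k : ℝ) ^ 2 * ν k) := by
    refine hm.congr fun k => ?_
    rw [show ((2:ℝ)) = ((2:ℕ) : ℝ) by norm_num, Real.rpow_natCast, sq_abs]
  -- HasSum for the Fourier series
  have hS1 : HasSum (fun k : ℤ => (ν k : ℂ) * e k t) (fourierZ ν t) :=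
    ((summable_norm_coe h t).of_norm).hasSum
  have hS2 : HasSum (fun k : ℤ => ((ν k : ℝ) : ℂ)) 1 := by
    have := Complex.ofRealCLM.hasSum h.2
    simpa using this
  have hS3 : HasSum (fun k : ℤ => (((k : ℝ) * ν k : ℝ) : ℂ)) 0 := by
    have := Complex.ofRealCLM.hasSum hz
    simpa using this
  set c : ℂ := 2 * (Real.pi : ℂ) * Complex.I * (t : ℂ) with hc
  have hS4 : HasSum (fun k : ℤ => (ν k : ℂ) * (e k t - 1 + c * k)) (fourierZ ν t - 1) := by
    have h4 := (hS1.sub hS2).add ((hS3.mul_left c))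
    simp only [mul_zero, add_zero] at h4
    refine h4.congr_fun fun k => ?_
    push_cast
    ring
  -- per-term bound
  have hbd : ∀ k : ℤ, ‖(ν k : ℂ) * (e k t - 1 + c * k)‖
      ≤ 12 * Real.pi ^ 2 * t ^ 2 * ((k : ℝ) ^ 2 * ν k) := by
    intro k
    set x : ℝ := -(2 * Real.pi * k * t) with hx
    have he : e k t - 1 + c * k = Complex.exp (Complex.I * x) - 1 - Complex.I * x := by
      have h1 : (-2 * (Real.pi : ℂ) * Complex.I) * (k : ℂ) * (t : ℂ) = Complex.I * (x : ℝ) := by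
        rw [hx]; push_cast; ring
      have h2 : c * k = -(Complex.I * (x : ℝ)) := by
        rw [hc, hx]; push_cast; ring
      rw [e, h1, h2]; ring
    rw [norm_mul, he, Complex.norm_real, Real.norm_eq_abs]
    have h3 : ‖Complex.exp (Complex.I * x) - 1 - Complex.I * x‖ ≤ 3 * x ^ 2 :=
      abs_exp_I_sub_one_sub_le x
    have h4 : (3 : ℝ) * x ^ 2 = 12 * Real.pi ^ 2 * t ^ 2 * (k : ℝ) ^ 2 := by
      rw [hx]; ring
    calc |ν k| * ‖Complex.exp (Complex.I * x) - 1 - Complex.I * x‖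
        ≤ ν k * (3 * x ^ 2) := by
          rw [abs_of_nonneg (h.1 k)]
          exact mul_le_mul_of_nonneg_left h3 (h.1 k)
      _ = 12 * Real.pi ^ 2 * t ^ 2 * ((k : ℝ) ^ 2 * ν k) := by rw [h4]; ring
  have hsb : Summable (fun k : ℤ => 12 * Real.pi ^ 2 * t ^ 2 * ((k : ℝ) ^ 2 * ν k)) :=
    hm'.mul_left _
  have hnormsum : Summable (fun k : ℤ => ‖(ν k : ℂ) * (e k t - 1 + c * k)‖) :=
    Summable.of_nonneg_of_le (fun k => norm_nonneg _) hbd hsb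
  calc ‖fourierZ ν t - 1‖ = ‖fourierZ ν t - 1‖ := rfl
    _ ≤ ∑' k : ℤ, ‖(ν k : ℂ) * (e k t - 1 + c * k)‖ := by
        rw [← hS4.tsum_eq]
        exact norm_tsum_le_tsum_norm hnormsum
    _ ≤ ∑' k : ℤ, 12 * Real.pi ^ 2 * t ^ 2 * ((k : ℝ) ^ 2 * ν k) :=
        Summable.tsum_le_tsum hbd hnormsum hsb
    _ = 12 * Real.pi ^ 2 * t ^ 2 * ∑' k : ℤ, (k : ℝ) ^ 2 * ν k := tsum_mul_left
    _ = 12 * Real.pi ^ 2 * t ^ 2 * moment 2 ν := by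
        congr 1
        rw [moment]
        exact (tsum_congr fun k => by
          rw [show ((2:ℝ)) = ((2:ℕ) : ℝ) by norm_num, Real.rpow_natCast, sq_abs]).symm

lemma abs_prod_sub_one_le {ι : Type*} (s : Finset ι) (z : ι → ℂ)
    (hz : ∀ i ∈ s, ‖z i‖ ≤ 1) :
    ‖∏ i ∈ s, z i - 1‖ ≤ ∑ i ∈ s, ‖z i - 1‖ := by
  classical
  induction s using Finset.induction_on with
  | empty => simp
  | insert a s' hnm ih =>
      rw [Finset.prod_insert hnm, Finset.sum_insert hnm]
      have key : z a * ∏ i ∈ s', z i - 1 = z a * (∏ i ∈ s', z i - 1) + (z a - 1) := by ring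
      have hza : ‖z a‖ ≤ 1 := hz a (Finset.mem_insert_self a s')
      calc ‖z a * ∏ i ∈ s', z i - 1‖
          ≤ ‖z a * (∏ i ∈ s', z i - 1)‖ + ‖z a - 1‖ := by
            rw [key]; exact norm_add_le _ _
        _ = ‖z a‖ * ‖∏ i ∈ s', z i - 1‖ + ‖z a - 1‖ := by
            rw [norm_mul]
        _ ≤ 1 * (∑ i ∈ s', ‖z i - 1‖) + ‖z a - 1‖ :=
            add_le_add (mul_le_mul hza (ih fun i hi => hz i (Finset.mem_insert_of_mem hi))
              (norm_nonneg _) zero_le_one) (le_refl _)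
        _ = ‖z a - 1‖ + ∑ i ∈ s', ‖z i - 1‖ := by ring

lemma abs_prod_le_one {ι : Type*} (s : Finset ι) (z : ι → ℂ)
    (hz : ∀ i ∈ s, ‖z i‖ ≤ 1) :
    ‖∏ i ∈ s, z i‖ ≤ 1 := by
  rw [norm_prod]
  exact Finset.prod_le_one (fun i _ => norm_nonneg _) hz

lemma two_mul_le_four_pow (N : ℕ) (hN : 1 ≤ N) : 2 * N ≤ 4 ^ N := by
  induction N with
  | zero => omega
  | succ n ih =>
      rcases Nat.eq_or_lt_of_le hN with h | h
      · have hn0 : n = 0 := by omega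
        subst hn0; norm_num
      · have h1 : 1 ≤ n := by omega
        have h2 := ih h1
        have h4 : 1 ≤ 4 ^ n := Nat.one_le_pow _ _ (by norm_num)
        rw [pow_succ]
        omega


lemma abs_fourierZ_convProd_le_exp (ν : ℕ → ℤ → ℝ) (hprob : ∀ i, 1 ≤ i → IsProbZ (ν i))
    (C : ℝ) (N₀ : ℕ)
    (hfour' : ∀ i, N₀ < i → ∀ t : ℝ, |t| ≤ 1/2 →
      ‖fourierZ (ν i) t‖ ≤ Real.exp (-C * t ^ 2))
    (n : ℕ) (hn : N₀ ≤ n) (t : ℝ) (ht : |t| ≤ 1/2) :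
    ‖fourierZ (convProd ν n) t‖ ≤ Real.exp (-C * t ^ 2 * ((n : ℝ) - N₀)) := by
  rw [fourierZ_convProd ν hprob t n, show Finset.Icc 1 n = Finset.Ioc 0 n from Finset.Icc_add_one_left_eq_Ioc 0 n,
    ← Finset.prod_Ioc_consecutive _ (Nat.zero_le N₀) hn, norm_mul]
  have h1 : ‖∏ i ∈ Finset.Ioc 0 N₀, fourierZ (ν i) t‖ ≤ 1 :=
    abs_prod_le_one _ _ fun i hi =>
      abs_fourierZ_le_one (hprob i (Finset.mem_Ioc.1 hi).1) t
  have h2 : ‖∏ i ∈ Finset.Ioc N₀ n, fourierZ (ν i) t‖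
      ≤ Real.exp (-C * t ^ 2 * ((n : ℝ) - N₀)) := by
    rw [norm_prod]
    calc ∏ i ∈ Finset.Ioc N₀ n, ‖fourierZ (ν i) t‖
        ≤ ∏ _i ∈ Finset.Ioc N₀ n, Real.exp (-C * t ^ 2) :=
          Finset.prod_le_prod (fun i _ => norm_nonneg _)
            (fun i hi => hfour' i (Finset.mem_Ioc.1 hi).1 t ht)
      _ = Real.exp (-C * t ^ 2) ^ (n - N₀) := by
          rw [Finset.prod_const, Nat.card_Ioc]
      _ = Real.exp (-C * t ^ 2 * ((n : ℝ) - N₀)) := by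
          rw [← Real.exp_nat_mul, Nat.cast_sub hn]
          ring_nf
  calc ‖∏ i ∈ Finset.Ioc 0 N₀, fourierZ (ν i) t‖
        * ‖∏ i ∈ Finset.Ioc N₀ n, fourierZ (ν i) t‖
      ≤ 1 * Real.exp (-C * t ^ 2 * ((n : ℝ) - N₀)) :=
        mul_le_mul h1 h2 (norm_nonneg _) zero_le_one
    _ = _ := one_mul _

end KFBaux

open KFBaux

/-- **Lemma 1.4.7(1).** On the dyadic band `2^{-(j+k)-1} ≤ |t| ≤ 2^{-(j+k)}`,
`|K̂ₙ(t)| = |μ̂ₙ(t) - μ̂_{4^{k-1}}(t)| ≤ C'·4^{-|j|}` for `4^{k-1} ≤ n < 4^k`.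
(Here the blocks are written as `4^k ≤ n < 4^{k+1}`, i.e. the paper's `k` is
`k + 1`.) -/
theorem kernel_fourier_band_bound
    (ν : ℕ → ℤ → ℝ)
    (hprob : ∀ i, 1 ≤ i → IsProbZ (ν i))
    (haper : ∀ i, 1 ≤ i → StrictlyAperiodic (ν i))
    (hmom : ∀ i, 1 ≤ i → Summable (fun k : ℤ => |(k : ℝ)| ^ (2 : ℝ) * ν i k))
    (hexp : ∀ i, 1 ≤ i → HasSum (fun k : ℤ => (k : ℝ) * ν i k) 0)
    (B : ℝ) (hB : ∀ n : ℕ, 1 ≤ n → ∑ i ∈ Finset.Icc 1 n, (moment 2 (ν i)) ^ 2 ≤ B * n)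
    (C : ℝ) (hC : 0 < C) (N₀ : ℕ) (hN₀ : 0 < N₀)
    (hfour : ∀ n, N₀ < n → ∀ t ∈ Set.Ico (-(1 : ℝ)/2) (1/2),
      ‖fourierZ (ν n) t‖ ≤ Real.exp (-C * t ^ 2))
    (μ : ℕ → ℤ → ℝ) (hμ : μ = convProd ν) :
    ∃ C' : ℝ, 0 ≤ C' ∧ ∀ k : ℕ, ∀ j : ℤ, 1 ≤ j + (k + 1 : ℤ) →
      ∀ n : ℕ, 4 ^ k ≤ n → n < 4 ^ (k + 1) →
        ∀ t : ℝ, (2 : ℝ) ^ (-(j + (k : ℤ) + 1) - 1) ≤ |t| → |t| ≤ (2 : ℝ) ^ (-(j + (k : ℤ) + 1)) →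
          ‖fourierZ (μ n) t - fourierZ (μ (4 ^ k)) t‖ ≤ C' / (4 : ℝ) ^ |j| := by
  subst hμ
  -- nonnegativity of B
  have hmom_nonneg : ∀ i, 1 ≤ i → 0 ≤ moment 2 (ν i) := fun i hi =>
    tsum_nonneg fun k => mul_nonneg (by positivity) ((hprob i hi).1 k)
  have hB0 : 0 ≤ B := by
    have h1 := hB 1 le_rfl
    simp only [Finset.Icc_self, Finset.sum_singleton, Nat.cast_one, mul_one] at h1
    exact le_trans (sq_nonneg _) h1
  -- the improved Fourier decay bound valid on all of [-1/2, 1/2]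
  have hfour' : ∀ i, N₀ < i → ∀ t : ℝ, |t| ≤ 1/2 →
      ‖fourierZ (ν i) t‖ ≤ Real.exp (-C * t ^ 2) := by
    intro i hi t ht
    rcases lt_or_eq_of_le (abs_le.1 ht).2 with h | h
    · exact hfour i hi t ⟨by linarith [(abs_le.1 ht).1], by linarith⟩
    · rw [h, fourierZ_half]
      have := hfour i hi (-(1/2)) ⟨by norm_num, by norm_num⟩
      calc ‖fourierZ (ν i) (-(1/2))‖ ≤ Real.exp (-C * (-(1/2) : ℝ) ^ 2) := this
        _ = Real.exp (-C * ((1:ℝ)/2) ^ 2) := by norm_num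
  -- bound on the sum of second moments
  have hmsum : ∀ n : ℕ, 1 ≤ n →
      ∑ i ∈ Finset.Icc 1 n, moment 2 (ν i) ≤ Real.sqrt B * n := by
    intro n hn
    have h1 : (∑ i ∈ Finset.Icc 1 n, moment 2 (ν i)) ^ 2
        ≤ (Finset.Icc 1 n).card * ∑ i ∈ Finset.Icc 1 n, (moment 2 (ν i)) ^ 2 :=
      sq_sum_le_card_mul_sum_sq
    have hcard : ((Finset.Icc 1 n).card : ℝ) = n := by
      rw [Nat.card_Icc]; simp
    have h2 : (∑ i ∈ Finset.Icc 1 n, moment 2 (ν i)) ^ 2 ≤ B * n * n := by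
      calc (∑ i ∈ Finset.Icc 1 n, moment 2 (ν i)) ^ 2
          ≤ (n : ℝ) * ∑ i ∈ Finset.Icc 1 n, (moment 2 (ν i)) ^ 2 := by
            rw [← hcard]; exact_mod_cast h1
        _ ≤ (n : ℝ) * (B * n) := by
            have := hB n hn
            have hn0 : (0:ℝ) ≤ n := Nat.cast_nonneg n
            nlinarith
        _ = B * n * n := by ring
    have h3 : (Real.sqrt B * n) ^ 2 = B * n * n := by
      rw [mul_pow, Real.sq_sqrt hB0]; ring
    have h4 : 0 ≤ ∑ i ∈ Finset.Icc 1 n, moment 2 (ν i) :=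
      Finset.sum_nonneg fun i hi => hmom_nonneg i (Finset.mem_Icc.1 hi).1
    have h5 : 0 ≤ Real.sqrt B * n := mul_nonneg (Real.sqrt_nonneg B) (Nat.cast_nonneg n)
    nlinarith
  -- the constant
  refine ⟨2 * 4 ^ N₀ + 12 * Real.pi ^ 2 * Real.sqrt B + 64 / C, by positivity, ?_⟩
  intro k j hjk n hn1 hn2 t ht1 ht2
  set Cp : ℝ := 2 * 4 ^ N₀ + 12 * Real.pi ^ 2 * Real.sqrt B + 64 / C with hCp
  set M : ℤ := j + (k : ℤ) + 1 with hM
  have hM1 : 1 ≤ M := by omega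
  have h2ne : (2:ℝ) ≠ 0 := two_ne_zero
  have hzpos : ∀ a : ℤ, (0:ℝ) < (2:ℝ) ^ a := fun a => zpow_pos two_pos a
  have h4z : ∀ a : ℤ, (4:ℝ) ^ a = (2:ℝ) ^ (2 * a) := by
    intro a
    rw [show (4:ℝ) = (2:ℝ) ^ (2:ℤ) by norm_num, ← zpow_mul]
  have ht2' : |t| ≤ (2:ℝ) ^ (-M) := ht2
  have ht1' : (2:ℝ) ^ (-M - 1) ≤ |t| := ht1
  have ht_half : |t| ≤ 1/2 := by
    refine le_trans ht2' ?_
    calc (2:ℝ) ^ (-M) ≤ (2:ℝ) ^ (-1 : ℤ) := zpow_le_zpow_right₀ one_le_two (by omega)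
      _ = 1/2 := by norm_num
  -- squared bounds on t
  have htsq_up : t ^ 2 ≤ (2:ℝ) ^ (-2 * M) := by
    have := pow_le_pow_left₀ (abs_nonneg t) ht2' 2
    rw [sq_abs] at this
    calc t ^ 2 ≤ ((2:ℝ) ^ (-M)) ^ 2 := this
      _ = (2:ℝ) ^ (-M) * (2:ℝ) ^ (-M) := sq _
      _ = (2:ℝ) ^ (-M + -M) := (zpow_add₀ h2ne _ _).symm
      _ = (2:ℝ) ^ (-2 * M) := by ring_nf
  have htsq_lo : (2:ℝ) ^ (-2 * M - 2) ≤ t ^ 2 := by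
    have := pow_le_pow_left₀ (le_of_lt (hzpos (-M - 1))) ht1' 2
    rw [sq_abs] at this
    calc (2:ℝ) ^ (-2 * M - 2) = (2:ℝ) ^ ((-M - 1) + (-M - 1)) := by ring_nf
      _ = (2:ℝ) ^ (-M - 1) * (2:ℝ) ^ (-M - 1) := zpow_add₀ h2ne _ _
      _ = ((2:ℝ) ^ (-M - 1)) ^ 2 := (sq _).symm
      _ ≤ t ^ 2 := this
  -- goal RHS rewritten
  have hrhs : Cp / (4:ℝ) ^ |j| = Cp * (2:ℝ) ^ (-2 * |j|) := by
    rw [div_eq_mul_inv, h4z, ← zpow_neg]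
    ring_nf
  rw [hrhs]
  rcases le_or_gt 0 j with hj | hj
  · -- case j ≥ 0 : moment bound
    have habsj : |j| = j := abs_of_nonneg hj
    set P : ℕ → ℂ := fun i => fourierZ (ν i) t with hP
    have hsplit : (∏ i ∈ Finset.Ioc 0 (4 ^ k), P i) * ∏ i ∈ Finset.Ioc (4 ^ k) n, P i
        = ∏ i ∈ Finset.Ioc 0 n, P i := Finset.prod_Ioc_consecutive P (Nat.zero_le _) hn1
    have hF : ∀ m : ℕ, fourierZ (convProd ν m) t = ∏ i ∈ Finset.Ioc 0 m, P i := by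
      intro m
      rw [fourierZ_convProd ν hprob t m, show Finset.Icc 1 m = Finset.Ioc 0 m from
        Finset.Icc_add_one_left_eq_Ioc 0 m]
    have habs1 : ∀ i ∈ Finset.Ioc 0 (4 ^ k), ‖P i‖ ≤ 1 := fun i hi =>
      abs_fourierZ_le_one (hprob i (Finset.mem_Ioc.1 hi).1) t
    have key : ‖fourierZ (convProd ν n) t - fourierZ (convProd ν (4 ^ k)) t‖
        ≤ 12 * Real.pi ^ 2 * t ^ 2 * (Real.sqrt B * n) := by
      rw [hF, hF, ← hsplit]
      have heq : (∏ i ∈ Finset.Ioc 0 (4 ^ k), P i) * ∏ i ∈ Finset.Ioc (4 ^ k) n, P i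
          - ∏ i ∈ Finset.Ioc 0 (4 ^ k), P i
          = (∏ i ∈ Finset.Ioc 0 (4 ^ k), P i) * ((∏ i ∈ Finset.Ioc (4 ^ k) n, P i) - 1) := by
        ring
      rw [heq, norm_mul]
      have hb1 : ‖∏ i ∈ Finset.Ioc 0 (4 ^ k), P i‖ ≤ 1 :=
        abs_prod_le_one _ _ habs1
      have hb2 : ‖(∏ i ∈ Finset.Ioc (4 ^ k) n, P i) - 1‖
          ≤ ∑ i ∈ Finset.Ioc (4 ^ k) n, ‖P i - 1‖ :=
        abs_prod_sub_one_le _ _ fun i hi => by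
          have h1 : 0 < i := lt_of_le_of_lt (Nat.zero_le _)
            (lt_of_lt_of_le (pow_pos (by norm_num) k) (le_of_lt (Finset.mem_Ioc.1 hi).1))
          exact abs_fourierZ_le_one (hprob i h1) t
      have hb3 : ∑ i ∈ Finset.Ioc (4 ^ k) n, ‖P i - 1‖
          ≤ ∑ i ∈ Finset.Ioc 0 n, ‖P i - 1‖ :=
        Finset.sum_le_sum_of_subset_of_nonneg
          (Finset.Ioc_subset_Ioc (Nat.zero_le _) le_rfl)
          (fun i _ _ => norm_nonneg _)
      have hb4 : ∑ i ∈ Finset.Ioc 0 n, ‖P i - 1‖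
          ≤ ∑ i ∈ Finset.Ioc 0 n, 12 * Real.pi ^ 2 * t ^ 2 * moment 2 (ν i) := by
        refine Finset.sum_le_sum fun i hi => ?_
        have h1 : 1 ≤ i := (Finset.mem_Ioc.1 hi).1
        exact abs_fourierZ_sub_one_le (hprob i h1) (hmom i h1) (hexp i h1) t
      have hb5 : ∑ i ∈ Finset.Ioc 0 n, 12 * Real.pi ^ 2 * t ^ 2 * moment 2 (ν i)
          ≤ 12 * Real.pi ^ 2 * t ^ 2 * (Real.sqrt B * n) := by
        rw [← Finset.mul_sum]
        have hn' : 1 ≤ n := le_trans (Nat.one_le_pow _ _ (by norm_num)) hn1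
        have := hmsum n hn'
        rw [show Finset.Ioc 0 n = Finset.Icc 1 n from (Finset.Icc_add_one_left_eq_Ioc 0 n).symm]
        have hnn : (0:ℝ) ≤ 12 * Real.pi ^ 2 * t ^ 2 := by positivity
        exact mul_le_mul_of_nonneg_left this hnn
      calc ‖∏ i ∈ Finset.Ioc 0 (4 ^ k), P i‖
            * ‖(∏ i ∈ Finset.Ioc (4 ^ k) n, P i) - 1‖
          ≤ 1 * ∑ i ∈ Finset.Ioc (4 ^ k) n, ‖P i - 1‖ :=
            mul_le_mul hb1 hb2 (norm_nonneg _) zero_le_one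
        _ = ∑ i ∈ Finset.Ioc (4 ^ k) n, ‖P i - 1‖ := one_mul _
        _ ≤ 12 * Real.pi ^ 2 * t ^ 2 * (Real.sqrt B * n) := le_trans hb3 (le_trans hb4 hb5)
    refine le_trans key ?_
    -- numeric: t² n ≤ 2^{-2j}
    have hn3 : (n : ℝ) ≤ (2:ℝ) ^ (2 * (k : ℤ) + 2) := by
      have h1 : (n : ℝ) ≤ ((4 ^ (k + 1) : ℕ) : ℝ) := by
        exact_mod_cast le_of_lt hn2
      calc (n : ℝ) ≤ ((4 ^ (k + 1) : ℕ) : ℝ) := h1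
        _ = (4:ℝ) ^ ((k + 1 : ℕ) : ℤ) := by
            rw [zpow_natCast]
            push_cast
            ring
        _ = (2:ℝ) ^ (2 * ((k : ℤ) + 1)) := by rw [h4z]; push_cast; ring_nf
        _ = (2:ℝ) ^ (2 * (k : ℤ) + 2) := by ring_nf
    have ht2n : t ^ 2 * (n : ℝ) ≤ (2:ℝ) ^ (-2 * j) := by
      calc t ^ 2 * (n : ℝ) ≤ (2:ℝ) ^ (-2 * M) * (2:ℝ) ^ (2 * (k : ℤ) + 2) := by
            exact mul_le_mul htsq_up hn3 (Nat.cast_nonneg n) (le_of_lt (hzpos _))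
        _ = (2:ℝ) ^ (-2 * M + (2 * (k : ℤ) + 2)) := (zpow_add₀ h2ne _ _).symm
        _ = (2:ℝ) ^ (-2 * j) := by rw [hM]; ring_nf
    calc 12 * Real.pi ^ 2 * t ^ 2 * (Real.sqrt B * n)
        = 12 * Real.pi ^ 2 * Real.sqrt B * (t ^ 2 * n) := by ring
      _ ≤ 12 * Real.pi ^ 2 * Real.sqrt B * (2:ℝ) ^ (-2 * j) := by
          refine mul_le_mul_of_nonneg_left ht2n (by positivity)
      _ ≤ Cp * (2:ℝ) ^ (-2 * j) := by
          refine mul_le_mul_of_nonneg_right ?_ (le_of_lt (hzpos _))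
          rw [hCp]
          have hp1 : (0:ℝ) ≤ 2 * 4 ^ N₀ := by positivity
          have hp2 : (0:ℝ) ≤ 64 / C := by positivity
          linarith
      _ = Cp * (2:ℝ) ^ (-2 * |j|) := by rw [habsj]
  · -- case j < 0
    have habsj : |j| = -j := abs_of_neg hj
    have hjk' : -j ≤ (k : ℤ) := by omega
    rcases lt_or_ge k N₀ with hk | hk
    · -- small k : trivial bound
      have hd : ‖fourierZ (convProd ν n) t - fourierZ (convProd ν (4 ^ k)) t‖
          ≤ 2 := by
        calc ‖fourierZ (convProd ν n) t - fourierZ (convProd ν (4 ^ k)) t‖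
            ≤ ‖fourierZ (convProd ν n) t‖
              + ‖fourierZ (convProd ν (4 ^ k)) t‖ := norm_sub_le _ _
          _ ≤ 1 + 1 := add_le_add
              (abs_fourierZ_le_one (isProbZ_convProd ν hprob n) t)
              (abs_fourierZ_le_one (isProbZ_convProd ν hprob (4 ^ k)) t)
          _ = 2 := by norm_num
      refine le_trans hd ?_
      have h1 : (2:ℝ) ^ (2 * |j|) ≤ (2:ℝ) ^ (2 * (N₀ : ℤ)) :=
        zpow_le_zpow_right₀ one_le_two (by omega)
      have h2 : (2:ℝ) * (2:ℝ) ^ (2 * (N₀ : ℤ)) ≤ Cp := by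
        rw [hCp]
        have : (2:ℝ) ^ (2 * (N₀ : ℤ)) = (4:ℝ) ^ N₀ := by
          rw [← zpow_natCast (4:ℝ) N₀, h4z]
        rw [this]
        have hp1 : (0:ℝ) ≤ 12 * Real.pi ^ 2 * Real.sqrt B := by positivity
        have hp2 : (0:ℝ) ≤ 64 / C := by positivity
        linarith
      have h3 : (2:ℝ) ≤ Cp * (2:ℝ) ^ (-2 * |j|) := by
        have h4 : (2:ℝ) * (2:ℝ) ^ (2 * |j|) ≤ Cp := le_trans
          (mul_le_mul_of_nonneg_left h1 (by norm_num)) h2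
        have h5 : (0:ℝ) < (2:ℝ) ^ (2 * |j|) := hzpos _
        calc (2:ℝ) = 2 * (2:ℝ) ^ (2 * |j|) * (2:ℝ) ^ (-2 * |j|) := by
              rw [mul_assoc, ← zpow_add₀ h2ne]
              norm_num
          _ ≤ Cp * (2:ℝ) ^ (-2 * |j|) :=
              mul_le_mul_of_nonneg_right h4 (le_of_lt (hzpos _))
      exact h3
    · -- large k : exponential decay
      have h2N : 2 * N₀ ≤ 4 ^ k :=
        le_trans (two_mul_le_four_pow N₀ hN₀) (Nat.pow_le_pow_right (by norm_num) hk)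
      have hNr : (N₀ : ℝ) ≤ (2:ℝ) ^ (2 * (k : ℤ) - 1) := by
        have h1 : ((2 * N₀ : ℕ) : ℝ) ≤ ((4 ^ k : ℕ) : ℝ) := by exact_mod_cast h2N
        have h2 : ((4 ^ k : ℕ) : ℝ) = (2:ℝ) ^ (2 * (k : ℤ)) := by
          push_cast
          rw [← h4z, ← zpow_natCast (4:ℝ) k]
        rw [h2] at h1
        push_cast at h1
        have h3 : (2:ℝ) ^ (2 * (k : ℤ)) = 2 * (2:ℝ) ^ (2 * (k : ℤ) - 1) := by
          rw [show 2 * (k:ℤ) = 1 + (2 * (k:ℤ) - 1) by ring, zpow_add₀ h2ne, zpow_one]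
          norm_num
        rw [h3] at h1
        linarith
      -- the common lower bound for the exponent
      have hexpo : ∀ m : ℕ, 4 ^ k ≤ m →
          C / 32 * (2:ℝ) ^ (-2 * j) ≤ C * t ^ 2 * ((m : ℝ) - N₀) := by
        intro m hm
        have hm1 : (2:ℝ) ^ (2 * (k : ℤ)) ≤ (m : ℝ) := by
          have h1 : ((4 ^ k : ℕ) : ℝ) ≤ (m : ℝ) := by exact_mod_cast hm
          have h2 : ((4 ^ k : ℕ) : ℝ) = (2:ℝ) ^ (2 * (k : ℤ)) := by
            push_cast
            rw [← h4z, ← zpow_natCast (4:ℝ) k]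
          linarith [h2 ▸ h1]
        have hm2 : (2:ℝ) ^ (2 * (k : ℤ) - 1) ≤ (m : ℝ) - N₀ := by
          have h3 : (2:ℝ) ^ (2 * (k : ℤ)) = 2 * (2:ℝ) ^ (2 * (k : ℤ) - 1) := by
            rw [show 2 * (k:ℤ) = 1 + (2 * (k:ℤ) - 1) by ring, zpow_add₀ h2ne, zpow_one]
            norm_num
          norm_num
          have := hNr
          nlinarith [hzpos (2 * (k : ℤ) - 1)]
        have hprod : (2:ℝ) ^ (-2 * M - 2) * (2:ℝ) ^ (2 * (k : ℤ) - 1)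
            ≤ t ^ 2 * ((m : ℝ) - N₀) := by
          refine mul_le_mul htsq_lo hm2 (le_of_lt (hzpos _)) (by positivity)
        have heq2 : (2:ℝ) ^ (-2 * M - 2) * (2:ℝ) ^ (2 * (k : ℤ) - 1)
            = (2:ℝ) ^ (-2 * j - 5) := by
          rw [← zpow_add₀ h2ne, hM]
          ring_nf
        have heq3 : (2:ℝ) ^ (-2 * j - 5) = (2:ℝ) ^ (-2 * j) / 32 := by
          rw [show (-2 * j - 5) = (-2 * j) + (-5) by ring, zpow_add₀ h2ne,
            show ((2:ℝ) ^ (-5 : ℤ)) = 1/32 by norm_num]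
          ring
        rw [heq2, heq3] at hprod
        calc C / 32 * (2:ℝ) ^ (-2 * j) = C * ((2:ℝ) ^ (-2 * j) / 32) := by ring
          _ ≤ C * (t ^ 2 * ((m : ℝ) - N₀)) := mul_le_mul_of_nonneg_left hprod (le_of_lt hC)
          _ = C * t ^ 2 * ((m : ℝ) - N₀) := by ring
      set y : ℝ := C / 32 * (2:ℝ) ^ (-2 * j) with hy
      have hy0 : 0 < y := by
        rw [hy]; positivity
      have hexp_le : Real.exp (-y) ≤ 1 / y := by
        have h1 := Real.add_one_le_exp y
        rw [Real.exp_neg]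
        rw [one_div]
        exact inv_anti₀ hy0 (by linarith)
      have hbound : ∀ m : ℕ, 4 ^ k ≤ m →
          ‖fourierZ (convProd ν m) t‖ ≤ 1 / y := by
        intro m hm
        have hNm : N₀ ≤ m := le_trans (by omega) hm
        calc ‖fourierZ (convProd ν m) t‖
            ≤ Real.exp (-C * t ^ 2 * ((m : ℝ) - N₀)) :=
              abs_fourierZ_convProd_le_exp ν hprob C N₀ hfour' m hNm t ht_half
          _ ≤ Real.exp (-y) := by
              rw [Real.exp_le_exp]
              have := hexpo m hm
              nlinarith
          _ ≤ 1 / y := hexp_le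
      calc ‖fourierZ (convProd ν n) t - fourierZ (convProd ν (4 ^ k)) t‖
          ≤ ‖fourierZ (convProd ν n) t‖
            + ‖fourierZ (convProd ν (4 ^ k)) t‖ := norm_sub_le _ _
        _ ≤ 1 / y + 1 / y := add_le_add (hbound n hn1) (hbound (4 ^ k) le_rfl)
        _ = 64 / C * (2:ℝ) ^ (2 * j) := by
            rw [hy]
            rw [show (-2 : ℤ) * j = -(2 * j) by ring, zpow_neg]
            field_simp
            ring
        _ ≤ Cp * (2:ℝ) ^ (-2 * |j|) := by
            rw [habsj, show (-2 : ℤ) * -j = 2 * j by ring]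
            refine mul_le_mul_of_nonneg_right ?_ (le_of_lt (hzpos _))
            rw [hCp]
            have hp1 : (0:ℝ) ≤ 2 * 4 ^ N₀ := by positivity
            have hp2 : (0:ℝ) ≤ 12 * Real.pi ^ 2 * Real.sqrt B := by positivity
            linarith
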